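/- The limit lim_{t → ∞} g(t) / t^{1/(2α)} = (2α)^{1/(2Nα)} holds (property (g_7) of Lemma 2.1). -/

import Mathlib

open Real Filter Set

/-- If `f` has derivative `f'` on `(0, ∞)` and `f'` tends to `L` at infinity,
then `f t / t` tends to `L`. -/
lemma slope_tendsto_aux (f f' : ℝ → ℝ) (L : ℝ)
    (hd : ∀ x : ℝ, 0 < x → HasDerivAt f (f' x) x)
    (hl : Filter.Tendsto f' Filter.atTop (nhds L)) :
    Filter.Tendsto (fun t => f t / t) Filter.atTop (nhds L) := by
  rw [Metric.tendsto_nhds]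
  intro ε hε
  have h2 : ∀ᶠ x in atTop, |f' x - L| < ε / 2 := by
    have := Metric.tendsto_nhds.1 hl (ε / 2) (by linarith)
    simpa [Real.dist_eq] using this
  obtain ⟨T0, hT0⟩ := eventually_atTop.1 h2
  set T : ℝ := max T0 1 with hTdef
  have hT1 : (1 : ℝ) ≤ T := le_max_right _ _
  have hTpos : (0 : ℝ) < T := lt_of_lt_of_le one_pos hT1
  have key : ∀ t, T ≤ t → |(f t - L * t) - (f T - L * T)| ≤ ε / 2 * (t - T) := by
    intro t ht
    have hmvt := Convex.norm_image_sub_le_of_norm_hasDerivWithin_le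
      (f := fun y => f y - L * y) (f' := fun y => f' y - L) (C := ε / 2) (s := Icc T t)
      (fun x hx => by
        have h1 : HasDerivAt (fun y => f y - L * y) (f' x - L) x := by
          have h0 := (hd x (lt_of_lt_of_le hTpos hx.1)).sub ((hasDerivAt_id x).const_mul L)
          simp only [mul_one] at h0
          exact h0
        exact h1.hasDerivWithinAt)
      (fun x hx => by
        have := hT0 x (le_trans (le_max_left _ _) hx.1)
        rw [Real.norm_eq_abs]; exact this.le)
      (convex_Icc T t) ⟨le_refl T, ht⟩ ⟨ht, le_refl t⟩
    simp only [Real.norm_eq_abs] at hmvt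
    rw [abs_of_nonneg (sub_nonneg.2 ht)] at hmvt
    simpa using hmvt
  set C0 : ℝ := |f T - L * T| with hC0def
  have hC0 : 0 ≤ C0 := abs_nonneg _
  filter_upwards [eventually_ge_atTop (max T (2 * C0 / ε + 1))] with t ht
  have htT : T ≤ t := le_trans (le_max_left _ _) ht
  have ht2 : 2 * C0 / ε + 1 ≤ t := le_trans (le_max_right _ _) ht
  have htpos : 0 < t := lt_of_lt_of_le hTpos htT
  have h3 : |f t - L * t| ≤ C0 + ε / 2 * (t - T) := by
    have hk := key t htT
    have : |f t - L * t| ≤ |(f t - L * t) - (f T - L * T)| + |f T - L * T| := by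
      have := abs_add_le ((f t - L * t) - (f T - L * T)) (f T - L * T)
      simpa using this
    linarith
  rw [Real.dist_eq]
  have heq : f t / t - L = (f t - L * t) / t := by field_simp
  rw [heq, abs_div, abs_of_pos htpos, div_lt_iff₀ htpos]
  have h4 : 2 * C0 / ε + 1 ≤ t := ht2
  have h5 : 2 * C0 ≤ ε * (t - 1) := by
    rw [div_add' _ _ _ (ne_of_gt hε), div_le_iff₀ hε] at h4
    nlinarith
  nlinarith

theorem g_seven (N : ℕ) (hN : 2 ≤ N) (α : ℝ) (hα : 1 / 2 < α)
    (g : ℝ → ℝ) (hg_diff : Differentiable ℝ g) (hg_zero : g 0 = 0)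
    (hg_odd : ∀ t : ℝ, g (-t) = -g t)
    (hg_deriv : ∀ t : ℝ, deriv g t =
      (1 + (2 * α) ^ ((N : ℝ) - 1) * |g t| ^ ((N : ℝ) * (2 * α - 1))) ^ (-(1 / (N : ℝ))))
    : Filter.Tendsto (fun t : ℝ => g t / t ^ (1 / (2 * α))) Filter.atTop
      (nhds ((2 * α) ^ (1 / (2 * (N : ℝ) * α)))) := by
  have ha1 : (1 : ℝ) < 2 * α := by linarith
  have ha0 : (0 : ℝ) < 2 * α := by linarith
  have hNR : (0 : ℝ) < (N : ℝ) := by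
    have : (0 : ℕ) < N := by omega
    exact_mod_cast this
  set K : ℝ := (2 * α) ^ ((N : ℝ) - 1) with hKdef
  have hK0 : 0 < K := Real.rpow_pos_of_pos ha0 _
  set β : ℝ := (N : ℝ) * (2 * α - 1) with hβdef
  have hβ0 : 0 < β := mul_pos hNR (by linarith)
  -- positivity of the derivative
  have hbase : ∀ t : ℝ, (1 : ℝ) ≤ 1 + K * |g t| ^ β := fun t =>
    le_add_of_nonneg_right (mul_nonneg hK0.le (Real.rpow_nonneg (abs_nonneg _) _))
  have hbase0 : ∀ t : ℝ, (0 : ℝ) < 1 + K * |g t| ^ β := fun t =>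
    lt_of_lt_of_le one_pos (hbase t)
  have hderiv_pos : ∀ t : ℝ, 0 < deriv g t := by
    intro t
    rw [hg_deriv t]
    exact Real.rpow_pos_of_pos (hbase0 t) _
  have hmono : StrictMono g := strictMono_of_deriv_pos hderiv_pos
  have hgpos : ∀ t : ℝ, 0 < t → 0 < g t := by
    intro t ht
    have := hmono ht
    rwa [hg_zero] at this
  -- g tends to infinity
  have htop : Tendsto g atTop atTop := by
    apply tendsto_atTop_atTop_of_monotone hmono.monotone
    intro M
    by_contra h
    push_neg at h
    have hM : 0 < M := lt_trans (hgpos 1 one_pos) (h 1)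
    set c : ℝ := (1 + K * M ^ β) ^ (-(1 / (N : ℝ))) with hcdef
    have hMb : (0 : ℝ) < 1 + K * M ^ β :=
      lt_of_lt_of_le one_pos (le_add_of_nonneg_right (mul_nonneg hK0.le (Real.rpow_nonneg hM.le _)))
    have hc : 0 < c := Real.rpow_pos_of_pos hMb _
    have hlow : ∀ x ∈ interior (Ici (0:ℝ)), c ≤ deriv g x := by
      intro x hx
      rw [interior_Ici] at hx
      have hgx : 0 < g x := hgpos x hx
      have hgxM : |g x| ≤ M := by
        rw [abs_of_pos hgx]; exact (h x).le
      rw [hg_deriv x, hcdef]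
      apply Real.rpow_le_rpow_of_nonpos (hbase0 x)
      · have : |g x| ^ β ≤ M ^ β := Real.rpow_le_rpow (abs_nonneg _) hgxM hβ0.le
        nlinarith
      · have : (0:ℝ) < 1 / (N:ℝ) := by positivity
        linarith
    have hmvt := (convex_Ici (0:ℝ)).mul_sub_le_image_sub_of_le_deriv
      hg_diff.continuous.continuousOn (hg_diff.differentiableOn) hlow
      0 (self_mem_Ici) ((M + 1) / c) (mem_Ici.2 (by positivity)) (by positivity)
    rw [hg_zero, sub_zero, sub_zero, mul_div_cancel₀ _ hc.ne'] at hmvt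
    have := h ((M + 1) / c)
    linarith
  -- phi = g ^ (2α)
  set φ : ℝ → ℝ := fun t => g t ^ (2 * α) with hφdef
  set φ' : ℝ → ℝ := fun t => 2 * α * g t ^ (2 * α - 1) * deriv g t with hφ'def
  have hφd : ∀ x : ℝ, 0 < x → HasDerivAt φ (φ' x) x := by
    intro x hx
    have h1 : HasDerivAt (fun y : ℝ => y ^ (2 * α)) (2 * α * g x ^ (2 * α - 1)) (g x) :=
      Real.hasDerivAt_rpow_const (Or.inl (hgpos x hx).ne')
    have := h1.comp x (hg_diff x).hasDerivAt
    simpa [hφdef, hφ'def, mul_assoc, Function.comp_def] using this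
  set L : ℝ := (2 * α) ^ (1 / (N : ℝ)) with hLdef
  have hL0 : 0 < L := Real.rpow_pos_of_pos ha0 _
  -- limit of the derivative of φ
  have hφ'lim : Tendsto φ' atTop (nhds L) := by
    -- the model function of u = g t ^ β
    have hFlim : Tendsto (fun u : ℝ => 2 * α * ((u⁻¹ + K)⁻¹) ^ (1 / (N : ℝ))) atTop (nhds L) := by
      have t1 : Tendsto (fun u : ℝ => u⁻¹ + K) atTop (nhds (0 + K)) :=
        tendsto_inv_atTop_zero.add tendsto_const_nhds
      rw [zero_add] at t1
      have t2 : Tendsto (fun u : ℝ => (u⁻¹ + K)⁻¹) atTop (nhds K⁻¹) := t1.inv₀ hK0.ne'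
      have t3 : ContinuousAt (fun v : ℝ => v ^ (1 / (N : ℝ))) K⁻¹ :=
        Real.continuousAt_rpow_const _ _ (Or.inl (inv_ne_zero hK0.ne'))
      have t4 := (t3.tendsto.comp t2).const_mul (2 * α)
      have hval : 2 * α * (K⁻¹) ^ (1 / (N : ℝ)) = L := by
        rw [hKdef, ← Real.rpow_neg ha0.le, ← Real.rpow_mul ha0.le]
        calc 2 * α * (2 * α) ^ (-((N : ℝ) - 1) * (1 / (N : ℝ)))
            = (2 * α) ^ (1 + -((N : ℝ) - 1) * (1 / (N : ℝ))) := by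
              rw [Real.rpow_add ha0, Real.rpow_one]
          _ = L := by
              rw [hLdef]
              congr 1
              field_simp
              try ring
      rw [← hval]
      exact t4.congr (fun u => rfl)
    have hcomp := hFlim.comp ((tendsto_rpow_atTop hβ0).comp htop)
    apply hcomp.congr'
    filter_upwards [htop.eventually (eventually_gt_atTop 0)] with t hgt
    have hu : 0 < g t ^ β := Real.rpow_pos_of_pos hgt _
    set u : ℝ := g t ^ β with hudef
    have h1 : g t ^ (2 * α - 1) = u ^ (1 / (N : ℝ)) := by
      rw [hudef, ← Real.rpow_mul hgt.le]
      congr 1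
      rw [hβdef]
      field_simp
    have habs : |g t| = g t := abs_of_pos hgt
    have h2 : deriv g t = (1 + K * u) ^ (-(1 / (N : ℝ))) := by
      rw [hg_deriv t, habs]
    have h3 : (u⁻¹ + K)⁻¹ = u / (1 + K * u) := by
      have hu' : u ≠ 0 := hu.ne'
      have hb' : (1 + K * u) ≠ 0 := by positivity
      have hc' : (u⁻¹ + K) ≠ 0 := by positivity
      field_simp
      try ring
    show 2 * α * ((u⁻¹ + K)⁻¹) ^ (1 / (N : ℝ)) = 2 * α * g t ^ (2 * α - 1) * deriv g t
    rw [h1, h2, h3, Real.div_rpow hu.le (by positivity), Real.rpow_neg (by positivity),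
      div_eq_mul_inv]
    ring
  -- slope limit
  have hslope : Tendsto (fun t => φ t / t) atTop (nhds L) := slope_tendsto_aux φ φ' L hφd hφ'lim
  -- compose with rpow (1 / (2α))
  have hcont : ContinuousAt (fun v : ℝ => v ^ (1 / (2 * α))) L :=
    Real.continuousAt_rpow_const _ _ (Or.inl hL0.ne')
  have hfinal := hcont.tendsto.comp hslope
  have hval2 : L ^ (1 / (2 * α)) = (2 * α) ^ (1 / (2 * (N : ℝ) * α)) := by
    rw [hLdef, ← Real.rpow_mul ha0.le]
    congr 1
    field_simp
  rw [hval2] at hfinal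
  apply hfinal.congr'
  filter_upwards [eventually_gt_atTop (0:ℝ)] with t ht
  have hgt : 0 < g t := hgpos t ht
  show (φ t / t) ^ (1 / (2 * α)) = g t / t ^ (1 / (2 * α))
  rw [Real.div_rpow (by positivity) ht.le]
  congr 1
  rw [hφdef]
  show (g t ^ (2*α)) ^ (1 / (2 * α)) = g t
  rw [← Real.rpow_mul hgt.le, mul_one_div, div_self ha0.ne', Real.rpow_one]
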